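/- Let f ≠ 0, b ≠ 0 and σ be real numbers and define Φ₁(a) = (f²b²/a³)·(e^{−a} − 1 + a) + σ² for a > 0. Then Φ₁ is strictly decreasing on (0, ∞), and for any 0 < α < β and any real R with Φ₁(β) < R < Φ₁(α) there exists a unique a ∈ (α, β) such that Φ₁(a) = R. -/

import Mathlib

/-- Auxiliary: `(x+3) - (3-2x)e^x > 0` for `x > 0`. -/
lemma mme_aux_pos : ∀ x : ℝ, 0 < x → 0 < (x + 3) - (3 - 2 * x) * Real.exp x := by
  have hmono : StrictMonoOn (fun x : ℝ => (x + 3) - (3 - 2 * x) * Real.exp x)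
      (Set.Ici (0 : ℝ)) := by
    have hd : ∀ x : ℝ, HasDerivAt (fun x : ℝ => (x + 3) - (3 - 2 * x) * Real.exp x)
        (1 - (1 - 2 * x) * Real.exp x) x := by
      intro x
      have h1 : HasDerivAt (fun x : ℝ => (3 - 2 * x) * Real.exp x)
          ((-2) * Real.exp x + (3 - 2 * x) * Real.exp x) x := by
        have ha : HasDerivAt (fun x : ℝ => 3 - 2 * x) (-2) x := by
          simpa using ((hasDerivAt_id x).const_mul (2 : ℝ)).const_sub 3
        simpa using ha.fun_mul (Real.hasDerivAt_exp x)
      have h2 : HasDerivAt (fun x : ℝ => x + 3) 1 x := (hasDerivAt_id x).add_const 3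
      have := h2.fun_sub h1
      refine this.congr_deriv ?_
      ring
    apply strictMonoOn_of_deriv_pos (convex_Ici 0)
    · exact fun x _ => ((hd x).differentiableAt.continuousAt).continuousWithinAt
    · intro x hx
      rw [interior_Ici] at hx
      rw [(hd x).deriv]
      have hx0 : (0 : ℝ) < x := hx
      have he : 1 - x < Real.exp (-x) := by
        have := Real.add_one_lt_exp (x := -x) (by linarith : (-x) ≠ 0)
        linarith
      have hep : (0 : ℝ) < Real.exp x := Real.exp_pos x
      have hinv : Real.exp (-x) * Real.exp x = 1 := by
        rw [← Real.exp_add]; simp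
      -- (1-2x) e^x ≤ (1-x) e^x < e^(-x) e^x = 1
      have h1 : (1 - 2 * x) * Real.exp x ≤ (1 - x) * Real.exp x :=
        mul_le_mul_of_nonneg_right (by linarith) hep.le
      have h2 : (1 - x) * Real.exp x < Real.exp (-x) * Real.exp x :=
        mul_lt_mul_of_pos_right he hep
      rw [hinv] at h2
      linarith
  intro x hx
  have := hmono (Set.self_mem_Ici) (Set.mem_Ici.mpr hx.le) hx
  simpa using this

/-- Auxiliary: the numerator of `Φ₁'` is negative for `a > 0`. -/
lemma mme_num_neg : ∀ a : ℝ, 0 < a → 3 - 2 * a - (a + 3) * Real.exp (-a) < 0 := by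
  intro a ha
  have hp := mme_aux_pos a ha
  have hep : (0 : ℝ) < Real.exp (-a) := Real.exp_pos _
  have hinv : Real.exp a * Real.exp (-a) = 1 := by
    rw [← Real.exp_add]; simp
  have h : ((3 - 2 * a) * Real.exp a) * Real.exp (-a) < (a + 3) * Real.exp (-a) :=
    mul_lt_mul_of_pos_right (by linarith) hep
  rw [mul_assoc, hinv, mul_one] at h
  linarith

/-- Auxiliary: derivative of `Φ₁`. -/
lemma mme_hasDerivAt (f b σ a : ℝ) (ha : 0 < a) :
    HasDerivAt (fun a : ℝ => f ^ 2 * b ^ 2 / a ^ 3 * (Real.exp (-a) - 1 + a) + σ ^ 2)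
      (f ^ 2 * b ^ 2 * (3 - 2 * a - (a + 3) * Real.exp (-a)) / a ^ 4) a := by
  have ha3 : a ^ 3 ≠ 0 := pow_ne_zero 3 ha.ne'
  have hN : HasDerivAt (fun a : ℝ => Real.exp (-a) - 1 + a)
      (Real.exp (-a) * (-1) - 0 + 1) a := by
    have he : HasDerivAt (fun x : ℝ => Real.exp (-x)) (Real.exp (-a) * (-1)) a :=
      (hasDerivAt_neg a).exp
    simpa using (he.sub_const 1).fun_add (hasDerivAt_id a)
  have hNum : HasDerivAt (fun a : ℝ => f ^ 2 * b ^ 2 * (Real.exp (-a) - 1 + a))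
      (f ^ 2 * b ^ 2 * (Real.exp (-a) * (-1) - 0 + 1)) a := hN.const_mul _
  have hDen : HasDerivAt (fun a : ℝ => a ^ 3) (3 * a ^ 2) a := by
    simpa using hasDerivAt_pow 3 a
  have hdiv := (hNum.fun_div hDen ha3).add_const (σ ^ 2)
  have hfun : (fun a : ℝ => f ^ 2 * b ^ 2 * (Real.exp (-a) - 1 + a) / a ^ 3 + σ ^ 2)
      = fun a : ℝ => f ^ 2 * b ^ 2 / a ^ 3 * (Real.exp (-a) - 1 + a) + σ ^ 2 := by
    funext x; ring
  rw [hfun] at hdiv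
  refine hdiv.congr_deriv ?_
  field_simp
  ring

/-- The moment function `Φ₁(a) = (f²b²/a³)(e^{−a} − 1 + a) + σ²` is strictly
decreasing on `(0, ∞)`, and the method-of-moments equation `Φ₁(a) = R` has a
unique solution in `(α, β)` whenever `Φ₁(β) < R < Φ₁(α)`. -/
theorem mme_equation_unique_solution
    (f b σ : ℝ) (hf : f ≠ 0) (hb : b ≠ 0)
    (Φ : ℝ → ℝ)
    (hΦ : ∀ a : ℝ, Φ a = f ^ 2 * b ^ 2 / a ^ 3 * (Real.exp (-a) - 1 + a) + σ ^ 2) :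
    StrictAntiOn Φ (Set.Ioi (0 : ℝ)) ∧
    ∀ α β R : ℝ, 0 < α → α < β → Φ β < R → R < Φ α →
      ∃! a : ℝ, a ∈ Set.Ioo α β ∧ Φ a = R := by
  have hΦeq : Φ = fun a : ℝ =>
      f ^ 2 * b ^ 2 / a ^ 3 * (Real.exp (-a) - 1 + a) + σ ^ 2 := funext hΦ
  have hC : (0 : ℝ) < f ^ 2 * b ^ 2 := by positivity
  have hderiv : ∀ a : ℝ, 0 < a → HasDerivAt Φ
      (f ^ 2 * b ^ 2 * (3 - 2 * a - (a + 3) * Real.exp (-a)) / a ^ 4) a := by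
    intro a ha; rw [hΦeq]; exact mme_hasDerivAt f b σ a ha
  have hcont : ContinuousOn Φ (Set.Ioi (0 : ℝ)) :=
    fun x hx => ((hderiv x hx).differentiableAt.continuousAt).continuousWithinAt
  have hanti : StrictAntiOn Φ (Set.Ioi (0 : ℝ)) := by
    apply strictAntiOn_of_deriv_neg (convex_Ioi 0) hcont
    intro x hx
    rw [interior_Ioi] at hx
    rw [(hderiv x hx).deriv]
    exact div_neg_of_neg_of_pos (mul_neg_of_pos_of_neg hC (mme_num_neg x hx))
      (pow_pos hx 4)
  refine ⟨hanti, fun α β R hα hαβ hβR hRα => ?_⟩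
  have hsub : Set.Icc α β ⊆ Set.Ioi (0 : ℝ) := fun x hx => lt_of_lt_of_le hα hx.1
  have hsub' : Set.Ioo α β ⊆ Set.Ioi (0 : ℝ) := fun x hx => hα.trans hx.1
  have hIVT := intermediate_value_Ioo' hαβ.le (hcont.mono hsub)
  obtain ⟨a, haI, haR⟩ := hIVT (Set.mem_Ioo.mpr ⟨hβR, hRα⟩)
  refine ⟨a, ⟨haI, haR⟩, ?_⟩
  rintro y ⟨hyI, hyR⟩
  exact hanti.injOn (hsub' hyI) (hsub' haI) (hyR.trans haR.symm)
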